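/- arXiv:0807.4041 — 5 statements merged into one kernel-verified Lean document; each statement's English description precedes it below -/
import Mathlib

section
/- For a function f such that the integrals converge absolutely, the iterated L₂-transform satisfies: ∫₀^∞ exp(-y²u²) (∫₀^∞ x exp(-x²u²) f(x) dx) du = (√π/2) ∫₀^∞ x f(x)/√(x²+y²) dx for all y > 0. -/
open MeasureTheory Real Set

/-- Lemma 1: iterated L₂-transform equals (√π/2) times the Glasser transform. -/
theorem iterated_L2_eq_glasser (f : ℝ → ℝ) (y : ℝ) (hy : 0 < y)
    (habs : IntegrableOn
      (fun p : ℝ × ℝ => Real.exp (-y^2 * p.1^2) * (p.2 * Real.exp (-p.2^2 * p.1^2) * f p.2))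
      ((Set.Ioi (0:ℝ)) ×ˢ (Set.Ioi (0:ℝ))))
    (hG : IntegrableOn (fun x : ℝ => x * f x / Real.sqrt (x^2 + y^2)) (Set.Ioi (0:ℝ))) :
    ∫ u in Set.Ioi (0:ℝ), Real.exp (-y^2 * u^2) *
        (∫ x in Set.Ioi (0:ℝ), x * Real.exp (-x^2 * u^2) * f x)
      = (Real.sqrt π / 2) * ∫ x in Set.Ioi (0:ℝ), x * f x / Real.sqrt (x^2 + y^2) := by
  have hprod : Integrable
      (fun p : ℝ × ℝ => Real.exp (-y^2 * p.1^2) * (p.2 * Real.exp (-p.2^2 * p.1^2) * f p.2))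
      ((volume.restrict (Set.Ioi (0:ℝ))).prod (volume.restrict (Set.Ioi (0:ℝ)))) := by
    rwa [Measure.prod_restrict]
  have h1 : ∫ u in Set.Ioi (0:ℝ), Real.exp (-y^2 * u^2) *
        (∫ x in Set.Ioi (0:ℝ), x * Real.exp (-x^2 * u^2) * f x)
      = ∫ u in Set.Ioi (0:ℝ), ∫ x in Set.Ioi (0:ℝ),
          Real.exp (-y^2 * u^2) * (x * Real.exp (-x^2 * u^2) * f x) := by
    congr 1; ext u; rw [MeasureTheory.integral_const_mul]
  rw [h1, MeasureTheory.integral_integral_swap hprod]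
  have h2 : Set.EqOn
      (fun x => ∫ u in Set.Ioi (0:ℝ), Real.exp (-y^2 * u^2) * (x * Real.exp (-x^2 * u^2) * f x))
      (fun x => Real.sqrt π / 2 * (x * f x / Real.sqrt (x^2 + y^2)))
      (Set.Ioi (0:ℝ)) := by
    intro x hx
    have hxy : 0 < x^2 + y^2 := by positivity
    have heq : ∀ u : ℝ, Real.exp (-y^2 * u^2) * (x * Real.exp (-x^2 * u^2) * f x)
        = (x * f x) * Real.exp (-(x^2 + y^2) * u^2) := by
      intro u
      have h : -(x^2 + y^2) * u^2 = -y^2 * u^2 + -x^2 * u^2 := by ring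
      rw [h, Real.exp_add]
      ring
    simp only []
    simp_rw [heq]
    rw [MeasureTheory.integral_const_mul, integral_gaussian_Ioi,
      Real.sqrt_div Real.pi_pos.le]
    have hs : Real.sqrt (x^2 + y^2) ≠ 0 := by positivity
    field_simp
  rw [setIntegral_congr_fun measurableSet_Ioi h2, MeasureTheory.integral_const_mul]
end

section
/- For 0 < μ < 1 and y > 0, the Glasser transform of x^(μ-1) satisfies ∫₀^∞ x^(μ-1)/√(x²+y²) dx = 2^(-μ) B(μ, 1/2 - μ/2) y^(μ-1), where B is the Beta function. -/
open MeasureTheory Real Set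


lemma real_beta (a b : ℝ) (ha : 0 < a) (hb : 0 < b) :
    ∫ s in Ioo (0:ℝ) 1, s ^ (a-1) * (1-s) ^ (b-1)
      = Real.Gamma a * Real.Gamma b / Real.Gamma (a+b) := by
  have key : Complex.betaIntegral a b
      = ((∫ s in Ioo (0:ℝ) 1, s ^ (a-1) * (1-s) ^ (b-1) : ℝ) : ℂ) := by
    rw [Complex.betaIntegral]
    rw [show (∫ s in Ioo (0:ℝ) 1, s ^ (a-1) * (1-s) ^ (b-1) : ℝ)
        = ∫ s in (0:ℝ)..1, s ^ (a-1) * (1-s) ^ (b-1) by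
      rw [intervalIntegral.integral_of_le zero_le_one, integral_Ioc_eq_integral_Ioo]]
    rw [← intervalIntegral.integral_ofReal]
    apply intervalIntegral.integral_congr
    intro x hx
    rw [uIcc_of_le zero_le_one] at hx
    obtain ⟨hx0, hx1⟩ := hx
    show (x:ℂ) ^ ((a:ℂ)-1) * (1-(x:ℂ)) ^ ((b:ℂ)-1) = _
    rw [show ((a:ℂ)-1) = ((a-1:ℝ):ℂ) by push_cast; ring,
      show ((b:ℂ)-1) = ((b-1:ℝ):ℂ) by push_cast; ring,
      show (1-(x:ℂ)) = ((1-x:ℝ):ℂ) by push_cast; ring,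
      ← Complex.ofReal_cpow hx0, ← Complex.ofReal_cpow (by linarith : (0:ℝ) ≤ 1 - x)]
    push_cast
    ring
  have h1 := Complex.Gamma_mul_Gamma_eq_betaIntegral
    (s := (a:ℂ)) (t := (b:ℂ)) (by simpa using ha) (by simpa using hb)
  rw [key, ← Complex.ofReal_add, Complex.Gamma_ofReal, Complex.Gamma_ofReal,
    Complex.Gamma_ofReal, ← Complex.ofReal_mul, ← Complex.ofReal_mul] at h1
  have h2 : Real.Gamma a * Real.Gamma b
      = Real.Gamma (a+b) * ∫ s in Ioo (0:ℝ) 1, s ^ (a-1) * (1-s) ^ (b-1) :=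
    mod_cast h1
  have h3 : Real.Gamma (a+b) ≠ 0 := (Real.Gamma_pos_of_pos (by linarith)).ne'
  field_simp [h2]
  rw [h2]; ring


lemma beta_Ioi (a b : ℝ) (ha : 0 < a) (hb : 0 < b) :
    ∫ t in Ioi (0:ℝ), t ^ (a-1) * (1+t) ^ (-(a+b))
      = ∫ s in Ioo (0:ℝ) 1, s ^ (a-1) * (1-s) ^ (b-1) := by
  have himg : (fun s : ℝ => s / (1-s)) '' Ioo 0 1 = Ioi 0 := by
    ext t
    constructor
    · rintro ⟨s, ⟨hs0, hs1⟩, rfl⟩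
      exact div_pos hs0 (by linarith)
    · intro ht
      have ht' : (0:ℝ) < t := ht
      refine ⟨t / (1+t), ⟨div_pos ht' (by linarith), by rw [div_lt_one (by linarith)]; linarith⟩, ?_⟩
      have h1 : 1 - t / (1+t) = 1 / (1+t) := by field_simp; ring
      show (t/(1+t)) / (1 - t/(1+t)) = t
      rw [h1]
      field_simp
  have hderiv : ∀ s ∈ Ioo (0:ℝ) 1,
      HasDerivWithinAt (fun s : ℝ => s / (1-s)) (((1-s)^2)⁻¹) (Ioo 0 1) s := by
    intro s hs
    have h1 : (1:ℝ) - s ≠ 0 := by have := hs.2; intro h; simp only [sub_eq_zero] at h; linarith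
    have := (hasDerivAt_id s).div (((hasDerivAt_id s).const_sub 1)) h1
    have h2 : (1 * (1 - id s) - id s * -1) / (1 - id s) ^ 2 = ((1-s)^2)⁻¹ := by simp only [id]; ring
    rw [h2] at this
    exact this.hasDerivWithinAt
  have hinj : InjOn (fun s : ℝ => s / (1-s)) (Ioo 0 1) := by
    rintro x ⟨hx0, hx1⟩ y ⟨hy0, hy1⟩ hxy
    simp only at hxy
    rw [div_eq_div_iff (by linarith) (by linarith)] at hxy
    nlinarith
  rw [← himg, integral_image_eq_integral_abs_deriv_smul measurableSet_Ioo hderiv hinj]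
  apply setIntegral_congr_fun measurableSet_Ioo
  rintro s ⟨hs0, hs1⟩
  have h1 : (0:ℝ) < 1 - s := by linarith
  have h2 : 1 + s / (1-s) = (1-s)⁻¹ := by field_simp; ring
  simp only [smul_eq_mul, h2]
  rw [abs_of_pos (by positivity), div_rpow hs0.le h1.le,
    ← Real.rpow_natCast (1-s) 2, ← Real.rpow_neg h1.le,
    Real.inv_rpow h1.le, ← Real.rpow_neg h1.le]
  rw [div_eq_mul_inv, ← Real.rpow_neg h1.le]
  rw [show (b-1 : ℝ) = (-((2:ℕ):ℝ)) + (-(a-1) + -(-(a+b))) by push_cast; ring,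
    Real.rpow_add h1, Real.rpow_add h1]
  ring


lemma sq_subst (μ : ℝ) :
    ∫ x in Ioi (0:ℝ), x ^ (μ-1) * (1+x^2) ^ (-(1/2):ℝ)
      = (1/2) * ∫ t in Ioi (0:ℝ), t ^ (μ/2-1) * (1+t) ^ (-(1/2):ℝ) := by
  rw [← MeasureTheory.integral_const_mul]
  rw [← integral_comp_rpow_Ioi_of_pos
    (g := fun t => (1/2) * (t ^ (μ/2-1) * (1+t) ^ (-(1/2):ℝ))) (p := 2) two_pos]
  apply setIntegral_congr_fun measurableSet_Ioi
  intro x hx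
  have hx' : (0:ℝ) < x := hx
  simp only [smul_eq_mul]
  rw [show ((2:ℝ)-1) = 1 by norm_num, Real.rpow_one,
    ← Real.rpow_natCast x 2, ← Real.rpow_mul hx'.le]
  push_cast
  rw [show (2:ℝ) * (μ/2-1) = μ - 2 by ring]
  rw [show x ^ (μ-1) = x * x ^ (μ-2) by
    rw [show μ-1 = 1+(μ-2) by ring, Real.rpow_add hx', Real.rpow_one]]
  ring

/-- Glasser transform of x^(μ-1): ∫₀^∞ x^(μ-1)/√(x²+y²) dx = 2^(-μ) B(μ, 1/2-μ/2) y^(μ-1). -/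
theorem glasser_of_power (μ y : ℝ) (hμ0 : 0 < μ) (hμ1 : μ < 1) (hy : 0 < y) :
    ∫ x in Set.Ioi (0:ℝ), x ^ (μ - 1) / Real.sqrt (x^2 + y^2)
      = (2:ℝ) ^ (-μ) *
        (Real.Gamma μ * Real.Gamma (1/2 - μ/2) / Real.Gamma (μ + (1/2 - μ/2))) *
        y ^ (μ - 1) := by
  have step1 := integral_comp_mul_left_Ioi
    (fun x => x ^ (μ - 1) / Real.sqrt (x^2 + y^2)) 0 hy
  rw [mul_zero] at step1
  have step2 : ∫ x in Ioi (0:ℝ),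
      (fun x => x ^ (μ - 1) / Real.sqrt (x^2 + y^2)) (y*x)
      = y ^ (μ-2) * ∫ x in Ioi (0:ℝ), x ^ (μ-1) * (1+x^2) ^ (-(1/2):ℝ) := by
    rw [← MeasureTheory.integral_const_mul]
    apply setIntegral_congr_fun measurableSet_Ioi
    intro x hx
    have hx' : (0:ℝ) < x := hx
    simp only
    have hsq : (y*x)^2 + y^2 = y^2 * (x^2+1) := by ring
    rw [hsq, Real.sqrt_mul (sq_nonneg y), Real.sqrt_sq hy.le,
      Real.mul_rpow hy.le hx'.le, Real.sqrt_eq_rpow]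
    rw [show x^2 + 1 = 1 + x^2 by ring,
      Real.rpow_neg (by positivity : (0:ℝ) ≤ 1+x^2) (1/2)]
    rw [show y ^ (μ-1) = y * y ^ (μ-2) by
      rw [show μ-1 = 1+(μ-2) by ring, Real.rpow_add hy, Real.rpow_one]]
    have hne : ((1:ℝ)+x^2) ^ ((1:ℝ)/2) ≠ 0 := by positivity
    field_simp
  rw [show (∫ x in Set.Ioi (0:ℝ), x ^ (μ - 1) / Real.sqrt (x^2 + y^2))
      = y • ∫ x in Ioi (0:ℝ), (fun x => x ^ (μ - 1) / Real.sqrt (x^2 + y^2)) (y*x) by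
    rw [step1, smul_smul, mul_inv_cancel₀ hy.ne', one_smul]]
  rw [step2, sq_subst μ]
  have hb : (0:ℝ) < 1/2 - μ/2 := by linarith
  have hK := beta_Ioi (μ/2) (1/2 - μ/2) (by linarith) hb
  rw [show (-(1/2):ℝ) = -(μ/2 + (1/2 - μ/2)) by ring, hK,
    real_beta (μ/2) (1/2 - μ/2) (by linarith) hb,
    show μ/2 + (1/2 - μ/2) = (1/2:ℝ) by ring, Real.Gamma_one_half_eq,
    show μ + (1/2 - μ/2) = μ/2 + 1/2 by ring]
  have hdup := Real.Gamma_mul_Gamma_add_half (μ/2)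
  rw [show (2:ℝ) * (μ/2) = μ by ring,
    show (2:ℝ) ^ (1-μ) = 2 * 2 ^ (-μ) by
      rw [show (1:ℝ)-μ = 1 + (-μ) by ring, Real.rpow_add two_pos, Real.rpow_one]] at hdup
  have hΓh : (0:ℝ) < Real.Gamma (μ/2 + 1/2) := Real.Gamma_pos_of_pos (by linarith)
  have hπ : (0:ℝ) < Real.sqrt π := Real.sqrt_pos.mpr Real.pi_pos
  have hy1 : y * y ^ (μ-2) = y ^ (μ-1) := by
    rw [show μ-1 = 1+(μ-2) by ring, Real.rpow_add hy, Real.rpow_one]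
  rw [smul_eq_mul, ← mul_assoc, hy1]
  rw [show (1/2 - μ/2 : ℝ) = (1-μ)/2 by ring]
  rw [show (μ/2+1/2 : ℝ) = (μ+1)/2 by ring] at hdup ⊢
  field_simp
  linear_combination (Real.Gamma ((1-μ)/2)) * hdup
end

section
/- If f and g are measurable functions on (0,∞) for which all integrals converge absolutely, then ∫₀^∞ L₂{f;y} · L₂{g;y} dy = (√π/2) ∫₀^∞ x f(x) · G{u g(u); x} dx, where L₂{f;y} = ∫₀^∞ x exp(-x²y²) f(x) dx and G{h;x} = ∫₀^∞ h(u)/√(u²+x²) du. -/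
open MeasureTheory Real Set

private lemma swap_Ioi (F : ℝ × ℝ → ℝ)
    (hF : IntegrableOn F ((Set.Ioi (0:ℝ)) ×ˢ (Set.Ioi (0:ℝ)))) :
    ∫ a in Set.Ioi (0:ℝ), ∫ b in Set.Ioi (0:ℝ), F (a, b)
      = ∫ b in Set.Ioi (0:ℝ), ∫ a in Set.Ioi (0:ℝ), F (a, b) := by
  have h : Integrable (Function.uncurry fun a b : ℝ => F (a, b))
      ((volume.restrict (Set.Ioi 0)).prod (volume.restrict (Set.Ioi 0))) := by
    rw [Measure.prod_restrict, ← Measure.volume_eq_prod]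
    exact hF
  exact integral_integral_swap h

/-- Theorem 1, identity (2.12): Parseval–Goldstein relation between the L₂-transform
and the Glasser transform. -/
theorem parseval_goldstein_L2_glasser (f g : ℝ → ℝ)
    (h1 : IntegrableOn
      (fun p : ℝ × ℝ => p.2 * Real.exp (-p.2^2 * p.1^2) * f p.2)
      ((Set.Ioi (0:ℝ)) ×ˢ (Set.Ioi (0:ℝ))))
    (h2 : IntegrableOn
      (fun p : ℝ × ℝ => p.2 * Real.exp (-p.2^2 * p.1^2) * g p.2)
      ((Set.Ioi (0:ℝ)) ×ˢ (Set.Ioi (0:ℝ))))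
    (h3 : IntegrableOn
      (fun p : ℝ × ℝ =>
        (∫ x in Set.Ioi (0:ℝ), x * Real.exp (-x^2 * p.1^2) * f x) *
          (p.2 * Real.exp (-p.2^2 * p.1^2) * g p.2))
      ((Set.Ioi (0:ℝ)) ×ˢ (Set.Ioi (0:ℝ))))
    (h4 : IntegrableOn
      (fun p : ℝ × ℝ => p.1 * f p.1 * (p.2 * g p.2) / Real.sqrt (p.2^2 + p.1^2))
      ((Set.Ioi (0:ℝ)) ×ˢ (Set.Ioi (0:ℝ)))) :
    ∫ y in Set.Ioi (0:ℝ),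
        (∫ x in Set.Ioi (0:ℝ), x * Real.exp (-x^2 * y^2) * f x) *
          (∫ u in Set.Ioi (0:ℝ), u * Real.exp (-u^2 * y^2) * g u)
      = (Real.sqrt π / 2) *
        ∫ x in Set.Ioi (0:ℝ),
          x * f x * (∫ u in Set.Ioi (0:ℝ), u * g u / Real.sqrt (u^2 + x^2)) := by
  set A : ℝ → ℝ := fun y => ∫ x in Set.Ioi (0:ℝ), x * Real.exp (-x^2 * y^2) * f x with hA
  -- inner identity for each u
  have inner : ∀ u : ℝ,
      (∫ y in Set.Ioi (0:ℝ), A y * (u * Real.exp (-u^2 * y^2) * g u))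
        = Real.sqrt π / 2 *
            ∫ x in Set.Ioi (0:ℝ), x * f x * (u * g u) / Real.sqrt (u^2 + x^2) := by
    intro u
    have hFu : IntegrableOn
        (fun p : ℝ × ℝ =>
          (p.2 * Real.exp (-p.2^2 * p.1^2) * f p.2) * (u * Real.exp (-u^2 * p.1^2) * g u))
        ((Set.Ioi (0:ℝ)) ×ˢ (Set.Ioi (0:ℝ))) := by
      have hφ : AEStronglyMeasurable
          (fun p : ℝ × ℝ => u * Real.exp (-u^2 * p.1^2) * g u)
          (volume.restrict ((Set.Ioi (0:ℝ)) ×ˢ (Set.Ioi (0:ℝ)))) := by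
        apply Continuous.aestronglyMeasurable
        fun_prop
      have hb : ∃ C, ∀ p : ℝ × ℝ, ‖u * Real.exp (-u^2 * p.1^2) * g u‖ ≤ C := by
        refine ⟨|u| * |g u|, fun p => ?_⟩
        rw [Real.norm_eq_abs, abs_mul, abs_mul, Real.abs_exp]
        calc |u| * Real.exp (-u^2 * p.1^2) * |g u|
            ≤ |u| * 1 * |g u| := by
              gcongr
              exact Real.exp_le_one_iff.mpr (by nlinarith [sq_nonneg u, sq_nonneg p.1])
          _ = |u| * |g u| := by ring
      exact (h1.bdd_mul hφ (Filter.Eventually.of_forall hb.choose_spec)).congr (Filter.Eventually.of_forall fun p => by ring)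
    calc (∫ y in Set.Ioi (0:ℝ), A y * (u * Real.exp (-u^2 * y^2) * g u))
        = ∫ y in Set.Ioi (0:ℝ), ∫ x in Set.Ioi (0:ℝ),
            (x * Real.exp (-x^2 * y^2) * f x) * (u * Real.exp (-u^2 * y^2) * g u) := by
          refine integral_congr_ae (Filter.Eventually.of_forall fun y => ?_)
          exact (integral_mul_const _ _).symm
      _ = ∫ x in Set.Ioi (0:ℝ), ∫ y in Set.Ioi (0:ℝ),
            (x * Real.exp (-x^2 * y^2) * f x) * (u * Real.exp (-u^2 * y^2) * g u) :=
          swap_Ioi (fun p : ℝ × ℝ =>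
            (p.2 * Real.exp (-p.2^2 * p.1^2) * f p.2) * (u * Real.exp (-u^2 * p.1^2) * g u)) hFu
      _ = ∫ x in Set.Ioi (0:ℝ), Real.sqrt π / 2 *
            (x * f x * (u * g u) / Real.sqrt (u^2 + x^2)) := by
          refine setIntegral_congr_fun measurableSet_Ioi fun x hx => ?_
          have hb0 : (0:ℝ) < u^2 + x^2 := by
            have : (0:ℝ) < x := hx
            positivity
          have e1 : ∀ y : ℝ,
              (x * Real.exp (-x^2 * y^2) * f x) * (u * Real.exp (-u^2 * y^2) * g u)
                = (x * f x * (u * g u)) * Real.exp (-(u^2 + x^2) * y^2) := by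
            intro y
            rw [show (-(u^2 + x^2) * y^2) = (-x^2 * y^2) + (-u^2 * y^2) by ring, Real.exp_add]
            ring
          rw [integral_congr_ae (Filter.Eventually.of_forall e1), integral_const_mul,
            integral_gaussian_Ioi, Real.sqrt_div' π hb0.le]
          ring
      _ = Real.sqrt π / 2 *
            ∫ x in Set.Ioi (0:ℝ), x * f x * (u * g u) / Real.sqrt (u^2 + x^2) := by
          rw [← integral_const_mul]
  calc ∫ y in Set.Ioi (0:ℝ), A y * (∫ u in Set.Ioi (0:ℝ), u * Real.exp (-u^2 * y^2) * g u)
      = ∫ y in Set.Ioi (0:ℝ), ∫ u in Set.Ioi (0:ℝ),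
          A y * (u * Real.exp (-u^2 * y^2) * g u) := by
        refine integral_congr_ae (Filter.Eventually.of_forall fun y => ?_)
        exact (integral_const_mul _ _).symm
    _ = ∫ u in Set.Ioi (0:ℝ), ∫ y in Set.Ioi (0:ℝ),
          A y * (u * Real.exp (-u^2 * y^2) * g u) :=
        swap_Ioi (fun p : ℝ × ℝ => A p.1 * (p.2 * Real.exp (-p.2^2 * p.1^2) * g p.2)) h3
    _ = ∫ u in Set.Ioi (0:ℝ), Real.sqrt π / 2 *
          ∫ x in Set.Ioi (0:ℝ), x * f x * (u * g u) / Real.sqrt (u^2 + x^2) := by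
        refine integral_congr_ae (Filter.Eventually.of_forall fun u => ?_)
        exact inner u
    _ = Real.sqrt π / 2 * ∫ u in Set.Ioi (0:ℝ),
          ∫ x in Set.Ioi (0:ℝ), x * f x * (u * g u) / Real.sqrt (u^2 + x^2) :=
        integral_const_mul _ _
    _ = Real.sqrt π / 2 * ∫ x in Set.Ioi (0:ℝ),
          ∫ u in Set.Ioi (0:ℝ), x * f x * (u * g u) / Real.sqrt (u^2 + x^2) := by
        rw [(swap_Ioi (fun p : ℝ × ℝ =>
          p.1 * f p.1 * (p.2 * g p.2) / Real.sqrt (p.2^2 + p.1^2)) h4)]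
    _ = Real.sqrt π / 2 * ∫ x in Set.Ioi (0:ℝ),
          x * f x * (∫ u in Set.Ioi (0:ℝ), u * g u / Real.sqrt (u^2 + x^2)) := by
        congr 1
        refine integral_congr_ae (Filter.Eventually.of_forall fun x => ?_)
        show (∫ u in Set.Ioi (0:ℝ), x * f x * (u * g u) / Real.sqrt (u^2 + x^2))
          = x * f x * ∫ u in Set.Ioi (0:ℝ), u * g u / Real.sqrt (u^2 + x^2)
        rw [← integral_const_mul]
        refine integral_congr_ae (Filter.Eventually.of_forall fun u => ?_)
        ring
end

section
/- Let 0 < μ < 1 and let f be such that all integrals converge absolutely. Then ∫₀^∞ u^(μ-1) (∫₀^∞ x f(x)/√(x²+u²) dx) du = (1/2) B(μ/2, 1/2 - μ/2) ∫₀^∞ x^μ f(x) dx. -/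
open MeasureTheory Real Set

lemma real_beta_Ioo' {a b : ℝ} (ha : 0 < a) (hb : 0 < b) :
    ∫ x in Ioo (0:ℝ) 1, x ^ (a-1) * (1-x) ^ (b-1)
      = Real.Gamma a * Real.Gamma b / Real.Gamma (a+b) := by
  have hab : 0 < Real.Gamma (a+b) := Real.Gamma_pos_of_pos (by linarith)
  have key := Complex.Gamma_mul_Gamma_eq_betaIntegral
    (s := (a:ℂ)) (t := (b:ℂ)) (by simpa using ha) (by simpa using hb)
  have hbeta : Complex.betaIntegral (a:ℂ) (b:ℂ)
      = ((∫ x in (0:ℝ)..1, x ^ (a-1) * (1-x) ^ (b-1) : ℝ) : ℂ) := by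
    rw [Complex.betaIntegral, ← intervalIntegral.integral_ofReal]
    refine intervalIntegral.integral_congr fun x hx => ?_
    rw [uIcc_of_le zero_le_one] at hx
    rw [show ((a:ℂ)-1) = ((a-1:ℝ):ℂ) by push_cast; ring,
      show ((b:ℂ)-1) = ((b-1:ℝ):ℂ) by push_cast; ring,
      show ((1:ℂ) - (x:ℝ)) = ((1-x:ℝ):ℂ) by push_cast; ring,
      ← Complex.ofReal_cpow hx.1, ← Complex.ofReal_cpow (by linarith [hx.2]),
      ← Complex.ofReal_mul]
  rw [hbeta] at key
  have : Complex.Gamma (a:ℂ) * Complex.Gamma (b:ℂ)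
      = Complex.Gamma ((a:ℂ) + (b:ℂ)) * _ := key
  rw [show ((a:ℂ)+(b:ℂ)) = ((a+b : ℝ) : ℂ) by push_cast; ring] at this
  rw [Complex.Gamma_ofReal, Complex.Gamma_ofReal, Complex.Gamma_ofReal] at this
  have h2 : Real.Gamma a * Real.Gamma b
      = Real.Gamma (a+b) * ∫ x in (0:ℝ)..1, x ^ (a-1) * (1-x) ^ (b-1) := by
    exact_mod_cast this
  rw [intervalIntegral.integral_of_le zero_le_one, integral_Ioc_eq_integral_Ioo] at h2
  rw [h2]; field_simp

lemma real_beta_Ioi' {a b : ℝ} (ha : 0 < a) (hb : 0 < b) :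
    ∫ t in Ioi (0:ℝ), t ^ (a-1) * (1+t) ^ (-(a+b))
      = Real.Gamma a * Real.Gamma b / Real.Gamma (a+b) := by
  rw [← real_beta_Ioo' ha hb]
  have hderiv : ∀ t ∈ Ioi (0:ℝ),
      HasDerivWithinAt (fun t : ℝ => t / (1+t)) (((1+t)^2)⁻¹) (Ioi 0) t := by
    intro t ht
    have h1t : (0:ℝ) < 1 + t := by simp at ht; linarith
    have h := HasDerivAt.div (hasDerivAt_id t) ((hasDerivAt_id t).const_add 1) h1t.ne'
    simp only [id] at h
    exact h.hasDerivWithinAt.congr_deriv (by ring)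
  have hinj : InjOn (fun t : ℝ => t / (1+t)) (Ioi 0) := by
    intro s hs t ht h
    simp only [mem_Ioi] at hs ht
    have h1s : (0:ℝ) < 1 + s := by linarith
    have h1t : (0:ℝ) < 1 + t := by linarith
    field_simp at h
    linarith
  have himg : (fun t : ℝ => t / (1+t)) '' (Ioi 0) = Ioo 0 1 := by
    ext x
    simp only [mem_image, mem_Ioi, mem_Ioo]
    constructor
    · rintro ⟨t, ht, rfl⟩
      have h1t : (0:ℝ) < 1 + t := by linarith
      constructor
      · positivity
      · rw [div_lt_one h1t]; linarith
    · rintro ⟨hx0, hx1⟩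
      have h1x : (0:ℝ) < 1 - x := by linarith
      refine ⟨x / (1-x), div_pos hx0 h1x, ?_⟩
      have h2 : 1 + x / (1-x) = 1 / (1-x) := by field_simp; ring
      rw [h2]
      field_simp
  have := integral_image_eq_integral_abs_deriv_smul measurableSet_Ioi hderiv hinj
    (fun x => x ^ (a-1) * (1-x) ^ (b-1))
  rw [himg] at this
  rw [this]
  refine setIntegral_congr_fun measurableSet_Ioi fun t ht => ?_
  simp only [mem_Ioi] at ht
  have h1t : (0:ℝ) < 1 + t := by linarith
  have h1 : 1 - t / (1+t) = (1+t)⁻¹ := by field_simp; ring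
  have habs2 : |((1+t)^2)⁻¹| = (1+t) ^ (-2 : ℝ) := by
    rw [abs_of_pos (by positivity), ← Real.rpow_natCast (1+t) 2, ← Real.rpow_neg h1t.le]
    norm_num
  rw [smul_eq_mul, habs2, h1, div_rpow ht.le h1t.le, Real.inv_rpow h1t.le,
    ← Real.rpow_neg h1t.le, div_eq_mul_inv, ← Real.rpow_neg h1t.le]
  rw [show (1+t)^(-(2:ℝ)) * (t^(a-1) * (1+t)^(-(a-1)) * (1+t)^(-(b-1)))
      = t^(a-1) * ((1+t)^(-(2:ℝ)) * (1+t)^(-(a-1)) * (1+t)^(-(b-1))) by ring,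
    ← Real.rpow_add h1t, ← Real.rpow_add h1t]
  ring_nf

lemma I_val' {μ : ℝ} (hμ0 : 0 < μ) (hμ1 : μ < 1) :
    ∫ t in Ioi (0:ℝ), t ^ (μ-1) / Real.sqrt (1 + t^2)
      = (1/2) * (Real.Gamma (μ/2) * Real.Gamma (1/2 - μ/2) / Real.Gamma (μ/2 + (1/2 - μ/2))) := by
  have h2 : (0:ℝ) < 2 := two_pos
  have key := integral_comp_rpow_Ioi_of_pos (p := 2)
    (g := fun y => (1/2) * (y ^ (μ/2-1) * (1+y) ^ (-(μ/2 + (1/2 - μ/2)) ))) h2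
  simp only [smul_eq_mul] at key
  rw [← real_beta_Ioi' (by linarith) (by linarith), ← MeasureTheory.integral_const_mul, ← key]
  refine (setIntegral_congr_fun measurableSet_Ioi fun x hx => ?_).symm
  simp only [mem_Ioi] at hx
  have hx2 : (0:ℝ) < 1 + x ^ (2:ℝ) := by positivity
  have e1 : (x ^ (2:ℝ)) ^ (μ/2 - 1) = x ^ (μ - 2) := by
    rw [← Real.rpow_mul hx.le]; ring_nf
  have e3 : (1 + x ^ (2:ℝ)) ^ (-(μ/2 + (1/2 - μ/2))) = 1 / Real.sqrt (1 + x^2) := by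
    rw [show (-(μ/2 + (1/2 - μ/2))) = -(1/2) by ring, Real.rpow_neg hx2.le,
      ← Real.sqrt_eq_rpow, one_div, Real.rpow_two, sq]
  simp only [e1, e3]
  rw [show x ^ (μ-1) = x ^ (1:ℝ) * x ^ (μ-2) by
    rw [← Real.rpow_add hx]; ring_nf]
  rw [Real.rpow_one]
  norm_num
  ring

lemma glasser_inner {μ x : ℝ} (hx : 0 < x) :
    ∫ u in Ioi (0:ℝ), u ^ (μ-1) / Real.sqrt (x^2 + u^2)
      = x ^ (μ-1) * ∫ t in Ioi (0:ℝ), t ^ (μ-1) / Real.sqrt (1 + t^2) := by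
  have key := integral_comp_mul_left_Ioi
    (g := fun u => u ^ (μ-1) / Real.sqrt (x^2 + u^2)) 0 hx
  rw [mul_zero] at key
  have hpt : ∀ t ∈ Ioi (0:ℝ),
      (fun u => u ^ (μ-1) / Real.sqrt (x^2 + u^2)) (x * t)
        = x⁻¹ * (x ^ (μ-1) * (t ^ (μ-1) / Real.sqrt (1 + t^2))) := by
    intro t ht
    simp only [mem_Ioi] at ht
    have hs : Real.sqrt (x^2 + (x*t)^2) = x * Real.sqrt (1 + t^2) := by
      rw [show x^2 + (x*t)^2 = x^2 * (1 + t^2) by ring, Real.sqrt_mul (sq_nonneg x),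
        Real.sqrt_sq hx.le]
    simp only [hs, Real.mul_rpow hx.le ht.le]
    field_simp
  rw [setIntegral_congr_fun measurableSet_Ioi hpt, MeasureTheory.integral_const_mul,
    MeasureTheory.integral_const_mul] at key
  rw [smul_eq_mul] at key
  have := mul_left_cancel₀ (inv_ne_zero hx.ne') key
  rw [this]

/-- Corollary (2.20): ∫₀^∞ u^(μ-1) G{x f(x); u} du = (1/2) B(μ/2, 1/2-μ/2) ∫₀^∞ x^μ f(x) dx. -/
theorem moment_of_glasser (f : ℝ → ℝ) (μ : ℝ) (hμ0 : 0 < μ) (hμ1 : μ < 1)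
    (habs : IntegrableOn
      (fun p : ℝ × ℝ => p.1 ^ (μ - 1) * (p.2 * f p.2 / Real.sqrt (p.2^2 + p.1^2)))
      ((Set.Ioi (0:ℝ)) ×ˢ (Set.Ioi (0:ℝ)))) :
    ∫ u in Set.Ioi (0:ℝ),
        u ^ (μ - 1) * (∫ x in Set.Ioi (0:ℝ), x * f x / Real.sqrt (x^2 + u^2))
      = (1/2) *
        (Real.Gamma (μ/2) * Real.Gamma (1/2 - μ/2) / Real.Gamma (μ/2 + (1/2 - μ/2))) *
        ∫ x in Set.Ioi (0:ℝ), x ^ μ * f x := by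
  set C : ℝ := (1/2) *
    (Real.Gamma (μ/2) * Real.Gamma (1/2 - μ/2) / Real.Gamma (μ/2 + (1/2 - μ/2))) with hC
  have habs' : Integrable
      (fun p : ℝ × ℝ => p.1 ^ (μ - 1) * (p.2 * f p.2 / Real.sqrt (p.2^2 + p.1^2)))
      ((volume.restrict (Ioi (0:ℝ))).prod (volume.restrict (Ioi (0:ℝ)))) := by
    rw [Measure.prod_restrict, ← Measure.volume_eq_prod]
    exact habs
  have swap := MeasureTheory.integral_integral_swap
    (f := fun u x => u ^ (μ - 1) * (x * f x / Real.sqrt (x^2 + u^2))) habs'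
  calc ∫ u in Set.Ioi (0:ℝ),
        u ^ (μ - 1) * (∫ x in Set.Ioi (0:ℝ), x * f x / Real.sqrt (x^2 + u^2))
      = ∫ u in Set.Ioi (0:ℝ), ∫ x in Set.Ioi (0:ℝ),
          u ^ (μ - 1) * (x * f x / Real.sqrt (x^2 + u^2)) := by
        refine setIntegral_congr_fun measurableSet_Ioi fun u hu => ?_
        rw [MeasureTheory.integral_const_mul]
    _ = ∫ x in Set.Ioi (0:ℝ), ∫ u in Set.Ioi (0:ℝ),
          u ^ (μ - 1) * (x * f x / Real.sqrt (x^2 + u^2)) := swap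
    _ = ∫ x in Set.Ioi (0:ℝ), (x ^ μ * f x) * C := by
        refine setIntegral_congr_fun measurableSet_Ioi fun x hx => ?_
        simp only [mem_Ioi] at hx
        have e1 : ∀ u : ℝ, u ^ (μ - 1) * (x * f x / Real.sqrt (x^2 + u^2))
            = (x * f x) * (u ^ (μ - 1) / Real.sqrt (x^2 + u^2)) := fun u => by ring
        simp only [e1]
        rw [MeasureTheory.integral_const_mul, glasser_inner hx, I_val' hμ0 hμ1, ← hC]
        rw [show x * f x * (x ^ (μ-1) * C) = (x * x ^ (μ-1)) * f x * C by ring]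
        rw [show x * x ^ (μ-1) = x ^ μ by
          nth_rewrite 1 [← Real.rpow_one x]
          rw [← Real.rpow_add hx]; ring_nf]
    _ = C * ∫ x in Set.Ioi (0:ℝ), x ^ μ * f x := by
        rw [MeasureTheory.integral_mul_const, mul_comm]
end

section
/- Suppose z > 0, ν real, and max{0, −2ν} < μ < 1. Then ∫₀^∞ y^(−μ−1) exp(−z²/(2y²)) I_ν(z²/(2y²)) dy = Γ(1/2 − μ/2) Γ(ν + μ/2) / (2√π · z^μ · Γ(ν − μ/2 + 1)). -/
open MeasureTheory Real Set
/-- Bessel function of the first kind of order ν (series definition). -/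
noncomputable def besselJ (ν x : ℝ) : ℝ :=
  ∑' k : ℕ, (-1)^k / ((k.factorial : ℝ) * Real.Gamma ((k : ℝ) + ν + 1)) *
    (x / 2) ^ (2 * (k : ℝ) + ν)

/-- Modified Bessel function of the first kind of order ν (series definition). -/
noncomputable def besselI (ν x : ℝ) : ℝ :=
  ∑' k : ℕ, 1 / ((k.factorial : ℝ) * Real.Gamma ((k : ℝ) + ν + 1)) *
    (x / 2) ^ (2 * (k : ℝ) + ν)

/-- Modified Bessel function of the second kind (Macdonald function) of order ν,
via its integral representation, valid for x > 0. -/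
noncomputable def besselK (ν x : ℝ) : ℝ :=
  ∫ t in Set.Ioi (0:ℝ), Real.exp (-x * Real.cosh t) * Real.cosh (ν * t)

/-- Modified Struve function of order 0 (series definition). -/
noncomputable def struveL0 (x : ℝ) : ℝ :=
  ∑' k : ℕ, (x / 2) ^ (2 * (k : ℝ) + 1) / (Real.Gamma ((k : ℝ) + 3/2))^2

lemma integrableOn_rpow_exp {a r : ℝ} (ha : 0 < a) (hr : 0 < r) :
    IntegrableOn (fun t : ℝ => t ^ (a - 1) * Real.exp (-(r * t))) (Ioi 0) := by
  have h0 : IntegrableOn (fun t : ℝ => Real.exp (-t) * t ^ (a - 1)) (Ioi 0) :=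
    Real.GammaIntegral_convergent ha
  have h1 : IntegrableOn (fun t : ℝ => Real.exp (-(r * t)) * (r * t) ^ (a - 1)) (Ioi 0) := by
    have := (integrableOn_Ioi_comp_mul_left_iff
      (fun t : ℝ => Real.exp (-t) * t ^ (a - 1)) 0 hr).2 (by simpa using h0)
    simpa using this
  have h2 := h1.const_mul (r ^ (a - 1))⁻¹
  refine IntegrableOn.congr_fun h2 (fun t ht => ?_) measurableSet_Ioi
  have htp : (0:ℝ) < t := ht
  rw [Real.mul_rpow hr.le htp.le]
  field_simp [(Real.rpow_pos_of_pos hr (a-1)).ne']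

lemma aux_eqOn {p c : ℝ} :
    EqOn (fun y : ℝ => y ^ (-(2*p+1)) * Real.exp (-(c / y^2)))
      (fun y : ℝ => (2:ℝ)⁻¹ * ((|(-2:ℝ)| * y ^ ((-2:ℝ) - 1)) •
        (fun u : ℝ => u ^ (p - 1) * Real.exp (-(c * u))) (y ^ (-2:ℝ)))) (Ioi 0) := by
  intro y hy
  have hy0 : (0:ℝ) < y := hy
  have h2 : y ^ ((2:ℕ):ℝ) = y ^ (2:ℕ) := Real.rpow_natCast y 2
  simp only [smul_eq_mul, abs_neg, abs_two]
  have hyn : y ^ (-2:ℝ) = (y ^ (2:ℕ))⁻¹ := by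
    rw [← h2, ← Real.rpow_neg hy0.le]; norm_num
  have hexp : c / y ^ 2 = c * y ^ (-2:ℝ) := by
    rw [hyn]; ring
  have hpow : (y ^ (-2:ℝ)) ^ (p - 1) = y ^ ((-2) * (p-1)) := by
    rw [← Real.rpow_mul hy0.le]
  rw [hexp, hpow]
  rw [show ((-2:ℝ) - 1) = (-3 : ℝ) by norm_num]
  have key : (2:ℝ)⁻¹ * (2 * y ^ (-3:ℝ) * (y ^ ((-2)*(p-1)) * Real.exp (-(c * y ^ (-2:ℝ)))))
      = y ^ ((-3) + (-2)*(p-1)) * Real.exp (-(c * y ^ (-2:ℝ))) := by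
    rw [Real.rpow_add hy0]; ring
  rw [key, show ((-3:ℝ) + (-2)*(p-1)) = -(2*p+1) by ring]

lemma integrableOn_aux {p c : ℝ} (hp : 0 < p) (hc : 0 < c) :
    IntegrableOn (fun y : ℝ => y ^ (-(2*p+1)) * Real.exp (-(c / y^2))) (Ioi 0) := by
  have hint : IntegrableOn (fun u : ℝ => u ^ (p - 1) * Real.exp (-(c * u))) (Ioi 0) :=
    integrableOn_rpow_exp hp hc
  have h := (integrableOn_Ioi_comp_rpow_iff
    (fun u : ℝ => u ^ (p - 1) * Real.exp (-(c * u))) (p := (-2:ℝ)) (by norm_num)).2 hint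
  exact IntegrableOn.congr_fun (h.const_mul (2:ℝ)⁻¹)
    (fun y hy => (aux_eqOn hy).symm) measurableSet_Ioi

lemma integral_aux {p c : ℝ} (hp : 0 < p) (hc : 0 < c) :
    ∫ y in Ioi (0:ℝ), y ^ (-(2*p+1)) * Real.exp (-(c / y^2))
      = 2⁻¹ * ((1/c) ^ p * Real.Gamma p) := by
  rw [setIntegral_congr_fun measurableSet_Ioi (aux_eqOn (p := p) (c := c))]
  rw [integral_const_mul]
  rw [MeasureTheory.integral_comp_rpow_Ioi (fun u : ℝ => u ^ (p - 1) * Real.exp (-(c * u)))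
    (p := (-2:ℝ)) (by norm_num)]
  rw [integral_rpow_mul_exp_neg_mul_Ioi hp hc]

lemma beta_eqOn_complex {a b : ℝ} :
    ∀ x ∈ uIcc (0:ℝ) 1, ((fun x : ℝ => ((x:ℂ)) ^ ((a:ℂ) - 1) * ((1:ℂ) - x) ^ ((b:ℂ) - 1)) x)
      = (fun x : ℝ => ((x ^ (a-1) * (1-x) ^ (b-1) : ℝ) : ℂ)) x := by
  intro x hx
  rw [Set.uIcc_of_le zero_le_one] at hx
  have hx0 : (0:ℝ) ≤ x := hx.1
  have hx1 : (0:ℝ) ≤ 1 - x := by linarith [hx.2]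
  simp only
  push_cast
  rw [Complex.ofReal_cpow hx0, Complex.ofReal_cpow hx1]
  push_cast
  ring

lemma beta_integrableOn {a b : ℝ} (ha : 0 < a) (hb : 0 < b) :
    IntegrableOn (fun x : ℝ => x ^ (a-1) * (1-x) ^ (b-1)) (Ioo 0 1) := by
  have hC : IntervalIntegrable (fun x : ℝ => ((x:ℂ)) ^ ((a:ℂ) - 1) * ((1:ℂ) - x) ^ ((b:ℂ) - 1))
      volume 0 1 := Complex.betaIntegral_convergent (by simpa using ha) (by simpa using hb)
  have h2 : IntegrableOn (fun x : ℝ => ((x:ℂ)) ^ ((a:ℂ) - 1) * ((1:ℂ) - x) ^ ((b:ℂ) - 1))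
      (Ioc 0 1) := (intervalIntegrable_iff_integrableOn_Ioc_of_le zero_le_one).1 hC
  have h3 : IntegrableOn (fun x : ℝ => RCLike.re (((x:ℂ)) ^ ((a:ℂ) - 1) * ((1:ℂ) - x) ^ ((b:ℂ) - 1)))
      (Ioc 0 1) := h2.re
  refine IntegrableOn.congr_fun (h3.mono_set Ioo_subset_Ioc_self) (fun x hx => ?_)
    measurableSet_Ioo
  have hmem : x ∈ uIcc (0:ℝ) 1 := by
    rw [Set.uIcc_of_le zero_le_one]
    exact ⟨hx.1.le, hx.2.le⟩
  have := beta_eqOn_complex (a := a) (b := b) x hmem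
  simp only at this
  rw [this]
  exact Complex.ofReal_re _

lemma beta_integral {a b : ℝ} (ha : 0 < a) (hb : 0 < b) :
    ∫ x in Ioo (0:ℝ) 1, x ^ (a-1) * (1-x) ^ (b-1)
      = Real.Gamma a * Real.Gamma b / Real.Gamma (a + b) := by
  have hab : (0:ℝ) < a + b := by linarith
  have hG := Complex.Gamma_mul_Gamma_eq_betaIntegral
    (s := (a:ℂ)) (t := (b:ℂ)) (by simpa using ha) (by simpa using hb)
  have hbeta : Complex.betaIntegral a b
      = ((∫ x in Ioo (0:ℝ) 1, x ^ (a-1) * (1-x) ^ (b-1) : ℝ) : ℂ) := by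
    rw [Complex.betaIntegral]
    rw [intervalIntegral.integral_congr beta_eqOn_complex]
    rw [intervalIntegral.integral_ofReal]
    norm_cast
    rw [intervalIntegral.integral_of_le zero_le_one, ← integral_Ioc_eq_integral_Ioo]
  rw [hbeta] at hG
  have hGa : Complex.Gamma (a:ℂ) = (Real.Gamma a : ℂ) := Complex.Gamma_ofReal a
  have hGb : Complex.Gamma (b:ℂ) = (Real.Gamma b : ℂ) := Complex.Gamma_ofReal b
  have hGab : Complex.Gamma ((a:ℂ) + b) = (Real.Gamma (a+b) : ℂ) := by
    rw [show ((a:ℂ) + b) = ((a + b : ℝ) : ℂ) by push_cast; ring, Complex.Gamma_ofReal]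
  rw [hGa, hGb, hGab] at hG
  have hR : Real.Gamma a * Real.Gamma b
      = Real.Gamma (a+b) * ∫ x in Ioo (0:ℝ) 1, x ^ (a-1) * (1-x) ^ (b-1) := by
    exact_mod_cast hG
  rw [eq_div_iff (Real.Gamma_pos_of_pos hab).ne', mul_comm _ (Real.Gamma (a+b)), ← hR]

lemma gamma_ratio_summable {a x : ℝ} (ha : 0 < a) (hx0 : 0 ≤ x) (hx1 : x < 1) :
    Summable (fun k : ℕ => Real.Gamma (a + k) * x ^ k / (k.factorial : ℝ)) := by
  rcases eq_or_lt_of_le hx0 with h | hx0'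
  · apply summable_of_ne_finset_zero (s := {0})
    intro k hk
    simp only [Finset.mem_singleton] at hk
    rw [← h, zero_pow hk]
    simp
  set f := fun k : ℕ => Real.Gamma (a + k) * x ^ k / (k.factorial : ℝ) with hf
  have hfpos : ∀ k, 0 < f k := by
    intro k
    have : (0:ℝ) < a + k := by positivity
    exact div_pos (mul_pos (Real.Gamma_pos_of_pos this) (pow_pos hx0' k)) (by positivity)
  set r := (1 + x) / 2 with hr
  have hr1 : r < 1 := by rw [hr]; linarith
  apply summable_of_ratio_norm_eventually_le hr1
  have htend : Filter.Tendsto (fun k : ℕ => (a + k) * x / (k + 1)) Filter.atTop (nhds x) := by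
    have h1 : (fun k : ℕ => (a + k) * x / (k + 1))
        = fun k : ℕ => ((a + k) / (k + 1)) * x := by
      funext k; ring
    rw [h1]
    have h2 : Filter.Tendsto (fun k : ℕ => (a + (k:ℝ)) / (k + 1)) Filter.atTop (nhds 1) := by
      have key : (fun k : ℕ => (a + (k:ℝ)) / ((k:ℝ) + 1))
          = fun k : ℕ => ((a - 1) / ((k:ℝ) + 1) + 1) := by
        funext k
        have : ((k:ℝ) + 1) ≠ 0 := by positivity
        field_simp
        ring
      rw [key]
      have h3 : Filter.Tendsto (fun k : ℕ => ((k:ℝ) + 1)) Filter.atTop Filter.atTop :=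
        Filter.tendsto_atTop_add_const_right _ 1 tendsto_natCast_atTop_atTop
      have h4 := Filter.Tendsto.div_atTop (tendsto_const_nhds (x := a - 1)) h3
      simpa using h4.add_const 1
    simpa using h2.mul_const x
  have hev : ∀ᶠ (k:ℕ) in Filter.atTop, (a + (k:ℝ)) * x / ((k:ℝ) + 1) ≤ r := by
    have hxr : x < r := by rw [hr]; linarith
    exact Filter.Tendsto.eventually_le_const hxr htend
  filter_upwards [hev] with k hk
  have hfact : ((k+1).factorial : ℝ) = (k+1) * (k.factorial : ℝ) := by
    push_cast [Nat.factorial_succ]; ring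
  have hGam : Real.Gamma (a + (k+1:ℕ)) = (a + k) * Real.Gamma (a + k) := by
    have hak : (0:ℝ) < a + k := by positivity
    have := Real.Gamma_add_one (s := a + k) hak.ne'
    rw [show a + ((k:ℕ)+1:ℕ) = (a + k) + 1 by push_cast; ring]
    rw [this]
  rw [Real.norm_of_nonneg (hfpos _).le, Real.norm_of_nonneg (hfpos _).le, hf]
  simp only
  rw [hGam, hfact, pow_succ]
  have hden : (0:ℝ) < (k.factorial : ℝ) := by positivity
  have hkk : (0:ℝ) < (k:ℝ) + 1 := by positivity
  have hgoal : (a + ↑k) * Real.Gamma (a + ↑k) * (x ^ k * x) / ((↑k + 1) * ↑k.factorial)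
      = ((a + ↑k) * x / (↑k + 1)) * (Real.Gamma (a + ↑k) * x ^ k / ↑k.factorial) := by
    field_simp
  calc (a + ↑k) * Real.Gamma (a + ↑k) * (x ^ k * x) / ((↑k + 1) * ↑k.factorial)
      = ((a + ↑k) * x / (↑k + 1)) * (Real.Gamma (a + ↑k) * x ^ k / ↑k.factorial) := hgoal
    _ ≤ r * (Real.Gamma (a + ↑k) * x ^ k / ↑k.factorial) := by
        apply mul_le_mul_of_nonneg_right hk
        have := hfpos k
        rw [hf] at this
        exact this.le

lemma real_exp_tsum (u : ℝ) : Real.exp u = ∑' n : ℕ, u ^ n / n.factorial := by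
  rw [Real.exp_eq_exp_ℝ, NormedSpace.exp_eq_tsum_div]

lemma hasSum_gamma_binomial {a x : ℝ} (ha : 0 < a) (hx0 : 0 < x) (hx1 : x < 1) :
    HasSum (fun k : ℕ => Real.Gamma (a + k) * x ^ k / (k.factorial : ℝ))
      (Real.Gamma a * (1 - x) ^ (-a)) := by
  have h1x : (0:ℝ) < 1 - x := by linarith
  set F : ℕ → ℝ → ℝ :=
    fun k t => (x ^ k / (k.factorial : ℝ)) * (t ^ (a + k - 1) * Real.exp (-(1 * t))) with hF
  have hak : ∀ k : ℕ, (0:ℝ) < a + k := fun k => by positivity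
  have hInt : ∀ k : ℕ, Integrable (F k) (volume.restrict (Ioi 0)) := fun k =>
    (integrableOn_rpow_exp (hak k) one_pos).const_mul _
  have hval : ∀ k : ℕ, ∫ t in Ioi (0:ℝ), F k t
      = Real.Gamma (a + k) * x ^ k / (k.factorial : ℝ) := by
    intro k
    rw [hF]
    simp only
    rw [integral_const_mul, integral_rpow_mul_exp_neg_mul_Ioi (hak k) one_pos]
    simp only [one_div, inv_one, Real.one_rpow, one_mul]
    ring
  have hFnonneg : ∀ k : ℕ, ∀ t ∈ Ioi (0:ℝ), 0 ≤ F k t := by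
    intro k t ht
    have ht0 : (0:ℝ) < t := ht
    rw [hF]
    have := Real.rpow_pos_of_pos ht0 (a + k - 1)
    positivity
  have hnorm : ∀ k : ℕ, (∫ t, ‖F k t‖ ∂(volume.restrict (Ioi 0)))
      = Real.Gamma (a + k) * x ^ k / (k.factorial : ℝ) := by
    intro k
    rw [← hval k]
    exact setIntegral_congr_fun measurableSet_Ioi
      (fun t ht => Real.norm_of_nonneg (hFnonneg k t ht))
  have hSummable : Summable (fun k : ℕ => Real.Gamma (a + k) * x ^ k / (k.factorial : ℝ)) :=
    gamma_ratio_summable ha hx0.le hx1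
  have hsumnorm : Summable (fun k : ℕ => ∫ t, ‖F k t‖ ∂(volume.restrict (Ioi 0))) := by
    rw [funext hnorm]; exact hSummable
  have hswap := MeasureTheory.integral_tsum_of_summable_integral_norm hInt hsumnorm
  -- pointwise sum
  have hpt : ∀ t ∈ Ioi (0:ℝ), (∑' k : ℕ, F k t)
      = t ^ (a - 1) * Real.exp (-((1-x) * t)) := by
    intro t ht
    have ht0 : (0:ℝ) < t := ht
    have hterm : ∀ k : ℕ, F k t = ((x*t) ^ k / (k.factorial : ℝ)) * (t ^ (a-1) * Real.exp (-t)) := by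
      intro k
      rw [hF]
      simp only
      rw [show a + (k:ℝ) - 1 = (a - 1) + k by ring, Real.rpow_add ht0,
        Real.rpow_natCast, mul_pow]
      rw [one_mul]
      ring
    rw [tsum_congr hterm, tsum_mul_right, ← real_exp_tsum]
    have hE : Real.exp (x*t) * Real.exp (-t) = Real.exp (-((1-x)*t)) := by
      rw [← Real.exp_add]; congr 1; ring
    calc Real.exp (x*t) * (t ^ (a-1) * Real.exp (-t))
        = t ^ (a-1) * (Real.exp (x*t) * Real.exp (-t)) := by ring
      _ = t ^ (a-1) * Real.exp (-((1-x)*t)) := by rw [hE]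
  rw [setIntegral_congr_fun measurableSet_Ioi hpt] at hswap
  rw [integral_rpow_mul_exp_neg_mul_Ioi ha h1x] at hswap
  have hvalue : (1 / (1-x)) ^ a * Real.Gamma a = Real.Gamma a * (1-x) ^ (-a) := by
    rw [one_div, ← Real.rpow_neg_one (1-x), ← Real.rpow_mul h1x.le]
    rw [show (-1:ℝ) * a = -a by ring]
    ring
  rw [funext hval, hvalue] at hswap
  exact hSummable.hasSum_iff.mpr hswap

lemma hasSum_gauss {a b c : ℝ} (ha : 0 < a) (hb : 0 < b) (hc : a + b < c) :
    HasSum (fun k : ℕ => Real.Gamma (a+k) * Real.Gamma (b+k)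
        / ((k.factorial : ℝ) * Real.Gamma (c+k)))
      (Real.Gamma a * Real.Gamma b * Real.Gamma (c-a-b)
        / (Real.Gamma (c-a) * Real.Gamma (c-b))) := by
  have hcb : (0:ℝ) < c - b := by linarith
  have hca : (0:ℝ) < c - a := by linarith
  have hcab : (0:ℝ) < c - a - b := by linarith
  set F : ℕ → ℝ → ℝ := fun k x =>
    (Real.Gamma (a+k) / (k.factorial : ℝ)) * (x ^ (b + k - 1) * (1-x) ^ ((c-b) - 1)) with hFdef
  set G : ℝ → ℝ := fun x => Real.Gamma a * (x ^ (b-1) * (1-x) ^ ((c-a-b) - 1)) with hGdef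
  have hbk : ∀ k : ℕ, (0:ℝ) < b + k := fun k => by positivity
  have hInt : ∀ k : ℕ, Integrable (F k) (volume.restrict (Ioo 0 1)) := fun k =>
    (beta_integrableOn (hbk k) hcb).const_mul _
  have hval : ∀ k : ℕ, ∫ x in Ioo (0:ℝ) 1, F k x
      = (Real.Gamma (a+k) / (k.factorial : ℝ))
        * (Real.Gamma (b+k) * Real.Gamma (c-b) / Real.Gamma (c+k)) := by
    intro k
    rw [hFdef]
    simp only
    rw [integral_const_mul, beta_integral (hbk k) hcb]
    rw [show b + (k:ℝ) + (c - b) = c + k by ring]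
  have hGint : Integrable G (volume.restrict (Ioo 0 1)) :=
    (beta_integrableOn hb hcab).const_mul _
  have hGval : ∫ x in Ioo (0:ℝ) 1, G x
      = Real.Gamma a * (Real.Gamma b * Real.Gamma (c-a-b) / Real.Gamma (c-a)) := by
    rw [hGdef]
    simp only
    rw [integral_const_mul, beta_integral hb hcab]
    rw [show b + (c - a - b) = c - a by ring]
  have hpth : ∀ x ∈ Ioo (0:ℝ) 1, HasSum (fun k : ℕ => F k x) (G x) := by
    intro x hx
    have hx0 : (0:ℝ) < x := hx.1
    have hx1 : x < 1 := hx.2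
    have h1x : (0:ℝ) < 1 - x := by linarith
    have h0 := (hasSum_gamma_binomial ha hx0 hx1).mul_right
      (x ^ (b-1) * (1-x) ^ ((c-b) - 1))
    have heq : (fun k : ℕ => Real.Gamma (a + k) * x ^ k / (k.factorial : ℝ)
        * (x ^ (b-1) * (1-x) ^ ((c-b) - 1))) = fun k : ℕ => F k x := by
      funext k
      rw [hFdef]
      simp only
      rw [show b + (k:ℝ) - 1 = (b - 1) + k by ring, Real.rpow_add hx0, Real.rpow_natCast]
      ring
    have hveq : Real.Gamma a * (1-x) ^ (-a) * (x ^ (b-1) * (1-x) ^ ((c-b) - 1)) = G x := by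
      rw [hGdef]
      simp only
      rw [show (c-a-b) - 1 = (-a) + ((c-b)-1) by ring, Real.rpow_add h1x]
      ring
    rw [heq, hveq] at h0
    exact h0
  have hFnonneg : ∀ k : ℕ, ∀ x ∈ Ioo (0:ℝ) 1, 0 ≤ F k x := by
    intro k x hx
    have hx0 : (0:ℝ) < x := hx.1
    have h1x : (0:ℝ) < 1 - x := by linarith [hx.2]
    have hg : (0:ℝ) < Real.Gamma (a+k) := Real.Gamma_pos_of_pos (by positivity)
    have h1 := Real.rpow_pos_of_pos hx0 (b + k - 1)
    have h2 := Real.rpow_pos_of_pos h1x ((c-b) - 1)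
    rw [hFdef]
    positivity
  have hvalnonneg : ∀ k : ℕ, 0 ≤ ∫ x in Ioo (0:ℝ) 1, F k x := fun k =>
    setIntegral_nonneg measurableSet_Ioo (hFnonneg k)
  have hbound : ∀ n : ℕ, (Finset.range n).sum (fun k => ∫ x in Ioo (0:ℝ) 1, F k x)
      ≤ ∫ x in Ioo (0:ℝ) 1, G x := by
    intro n
    rw [← MeasureTheory.integral_finset_sum _ (fun k _ => hInt k)]
    refine setIntegral_mono_on (integrable_finset_sum _ (fun k _ => hInt k)) hGint
      measurableSet_Ioo (fun x hx => ?_)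
    exact sum_le_hasSum (Finset.range n) (fun k _ => hFnonneg k x hx) (hpth x hx)
  have hSum : Summable (fun k : ℕ => ∫ x in Ioo (0:ℝ) 1, F k x) :=
    summable_of_sum_range_le hvalnonneg hbound
  have hnorm : ∀ k : ℕ, (∫ x, ‖F k x‖ ∂(volume.restrict (Ioo 0 1)))
      = ∫ x in Ioo (0:ℝ) 1, F k x := fun k =>
    setIntegral_congr_fun measurableSet_Ioo
      (fun x hx => Real.norm_of_nonneg (hFnonneg k x hx))
  have hsumnorm : Summable (fun k : ℕ => ∫ x, ‖F k x‖ ∂(volume.restrict (Ioo 0 1))) := by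
    rw [funext hnorm]; exact hSum
  have hswap := MeasureTheory.integral_tsum_of_summable_integral_norm hInt hsumnorm
  rw [setIntegral_congr_fun measurableSet_Ioo
    (fun x hx => (hpth x hx).tsum_eq), hGval] at hswap
  have hMain : HasSum (fun k : ℕ => ∫ x in Ioo (0:ℝ) 1, F k x)
      (Real.Gamma a * (Real.Gamma b * Real.Gamma (c-a-b) / Real.Gamma (c-a))) :=
    hSum.hasSum_iff.mpr hswap
  have hfin := hMain.div_const (Real.Gamma (c-b))
  have heq2 : (fun k : ℕ => (∫ x in Ioo (0:ℝ) 1, F k x) / Real.Gamma (c-b))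
      = fun k : ℕ => Real.Gamma (a+k) * Real.Gamma (b+k)
        / ((k.factorial : ℝ) * Real.Gamma (c+k)) := by
    funext k
    rw [hval k]
    have hgcb : Real.Gamma (c-b) ≠ 0 := (Real.Gamma_pos_of_pos hcb).ne'
    have hc0 : (0:ℝ) < c := by linarith
    have hgck : Real.Gamma (c+k) ≠ 0 := (Real.Gamma_pos_of_pos (by positivity)).ne'
    have hkf : ((k.factorial : ℝ)) ≠ 0 := by positivity
    field_simp
  have hveq2 : Real.Gamma a * (Real.Gamma b * Real.Gamma (c-a-b) / Real.Gamma (c-a))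
      / Real.Gamma (c-b)
      = Real.Gamma a * Real.Gamma b * Real.Gamma (c-a-b)
        / (Real.Gamma (c-a) * Real.Gamma (c-b)) := by
    field_simp
  rw [heq2, hveq2] at hfin
  exact hfin

/-- Example (3.16): ∫₀^∞ y^(−μ−1) exp(−z²/(2y²)) I_ν(z²/(2y²)) dy
    = Γ(1/2 − μ/2) Γ(ν + μ/2) / (2√π z^μ Γ(ν − μ/2 + 1)). -/
theorem integral_exp_besselI (z ν μ : ℝ) (hz : 0 < z)
    (hμ : max 0 (-2 * ν) < μ) (hμ1 : μ < 1) :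
    ∫ y in Set.Ioi (0:ℝ),
        y ^ (-μ - 1) * Real.exp (-z^2 / (2 * y^2)) * besselI ν (z^2 / (2 * y^2))
      = Real.Gamma (1/2 - μ/2) * Real.Gamma (ν + μ/2) /
          (2 * Real.sqrt π * z ^ μ * Real.Gamma (ν - μ/2 + 1)) := by
  have h0μ : 0 < μ := lt_of_le_of_lt (le_max_left _ _) hμ
  have hνμ : -2 * ν < μ := lt_of_le_of_lt (le_max_right _ _) hμ
  have hσ : 0 < ν + μ/2 := by linarith
  have hν : -(1:ℝ)/2 < ν := by linarith
  have hsqpi : (0:ℝ) < Real.sqrt π := Real.sqrt_pos.mpr Real.pi_pos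
  set c0 : ℝ := z^2 / 2 with hc0def
  have hc0 : 0 < c0 := by positivity
  -- Gauss sum
  have hGauss := hasSum_gauss (a := (ν + μ/2)/2) (b := (ν + μ/2)/2 + 1/2) (c := ν + 1)
    (by linarith) (by linarith) (by linarith)
  set T : ℝ := Real.Gamma ((ν + μ/2)/2) * Real.Gamma ((ν + μ/2)/2 + 1/2)
      * Real.Gamma (ν + 1 - (ν + μ/2)/2 - ((ν + μ/2)/2 + 1/2))
      / (Real.Gamma (ν + 1 - (ν + μ/2)/2) * Real.Gamma (ν + 1 - ((ν + μ/2)/2 + 1/2))) with hTdef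
  set C : ℝ := 2⁻¹ * c0 ^ (-(μ/2)) * (2:ℝ) ^ (μ/2 - 1) / Real.sqrt π with hCdef
  set g : ℕ → ℝ := fun k => Real.Gamma ((ν + μ/2)/2 + k) * Real.Gamma ((ν + μ/2)/2 + 1/2 + k)
      / ((k.factorial : ℝ) * Real.Gamma (ν + 1 + k)) with hgdef
  have hGauss' : HasSum g T := hGauss
  -- the term functions
  set K : ℕ → ℝ := fun k => (z^2/4) ^ (2*(k:ℝ)+ν) / ((k.factorial : ℝ)
      * Real.Gamma ((k:ℝ) + ν + 1)) with hKdef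
  set F : ℕ → ℝ → ℝ := fun k y => K k *
      (y ^ (-(2*(ν + μ/2 + 2*(k:ℝ))+1)) * Real.exp (-(c0 / y^2))) with hFdef
  have hpk : ∀ k : ℕ, (0:ℝ) < ν + μ/2 + 2*(k:ℝ) := fun k => by positivity
  have hkc : ∀ k : ℕ, (0:ℝ) ≤ (k:ℝ) := fun k => Nat.cast_nonneg k
  have hΓk : ∀ k : ℕ, (0:ℝ) < Real.Gamma ((k:ℝ) + ν + 1) := fun k =>
    Real.Gamma_pos_of_pos (by have := hkc k; linarith)
  have hΓk' : ∀ k : ℕ, (0:ℝ) < Real.Gamma (ν + 1 + k) := fun k =>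
    Real.Gamma_pos_of_pos (by have := hkc k; linarith)
  have hKpos : ∀ k : ℕ, 0 < K k := by
    intro k
    have h1 : (0:ℝ) < (z^2/4) ^ (2*(k:ℝ)+ν) := Real.rpow_pos_of_pos (by positivity) _
    have h2 := hΓk k
    rw [hKdef]
    positivity
  have hInt : ∀ k : ℕ, Integrable (F k) (volume.restrict (Ioi 0)) := fun k =>
    (integrableOn_aux (hpk k) hc0).const_mul _
  -- value of each integral
  have hkey : ∀ k : ℕ, ∫ y in Ioi (0:ℝ), F k y = C * g k := by
    intro k
    rw [hFdef]
    simp only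
    rw [integral_const_mul, integral_aux (hpk k) hc0]
    -- duplication formula
    have hdup := Real.Gamma_mul_Gamma_add_half ((ν + μ/2)/2 + k)
    rw [show 2 * ((ν + μ/2)/2 + (k:ℝ)) = ν + μ/2 + 2*(k:ℝ) by ring,
      show (ν + μ/2)/2 + (k:ℝ) + 1/2 = (ν + μ/2)/2 + 1/2 + (k:ℝ) by ring] at hdup
    rw [hgdef, hKdef]
    simp only
    rw [hdup]
    have e1 : Real.Gamma ((k:ℝ) + ν + 1) = Real.Gamma (ν + 1 + k) := by
      rw [show (k:ℝ) + ν + 1 = ν + 1 + k by ring]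
    rw [e1]
    have hkf : (0:ℝ) < (k.factorial : ℝ) := by positivity
    have hzz : (0:ℝ) < z^2/4 := by positivity
    have h2 : (0:ℝ) < (2:ℝ) := two_pos
    -- reduce to a pure rpow identity
    have hpow : (z^2/4) ^ (2*(k:ℝ)+ν) * (1/c0) ^ (ν + μ/2 + 2*(k:ℝ))
        = c0 ^ (-(μ/2)) * (2:ℝ) ^ (μ/2 - 1) * (2:ℝ) ^ (1 - (ν + μ/2 + 2*(k:ℝ))) := by
      have hb : z^2/4 = c0 * 2⁻¹ := by rw [hc0def]; ring
      rw [hb, Real.mul_rpow hc0.le (by norm_num),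
        Real.inv_rpow (by norm_num : (0:ℝ) ≤ 2),
        ← Real.rpow_neg (by norm_num : (0:ℝ) ≤ 2),
        one_div, Real.inv_rpow hc0.le, ← Real.rpow_neg hc0.le]
      calc c0 ^ (2*(k:ℝ)+ν) * (2:ℝ) ^ (-(2*(k:ℝ)+ν)) * c0 ^ (-(ν + μ/2 + 2*(k:ℝ)))
          = (c0 ^ (2*(k:ℝ)+ν) * c0 ^ (-(ν + μ/2 + 2*(k:ℝ)))) * (2:ℝ) ^ (-(2*(k:ℝ)+ν)) := by
            ring
        _ = c0 ^ (2*(k:ℝ)+ν + -(ν + μ/2 + 2*(k:ℝ))) * (2:ℝ) ^ (-(2*(k:ℝ)+ν)) := by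
            rw [← Real.rpow_add hc0]
        _ = c0 ^ (-(μ/2)) * (2:ℝ) ^ (-(2*(k:ℝ)+ν)) := by
            rw [show 2*(k:ℝ)+ν + -(ν + μ/2 + 2*(k:ℝ)) = -(μ/2) by ring]
        _ = c0 ^ (-(μ/2)) * ((2:ℝ) ^ (μ/2 - 1) * (2:ℝ) ^ (1 - (ν + μ/2 + 2*(k:ℝ)))) := by
            rw [← Real.rpow_add two_pos,
              show μ/2 - 1 + (1 - (ν + μ/2 + 2*(k:ℝ))) = -(2*(k:ℝ)+ν) by ring]
        _ = c0 ^ (-(μ/2)) * (2:ℝ) ^ (μ/2 - 1) * (2:ℝ) ^ (1 - (ν + μ/2 + 2*(k:ℝ))) := by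
            ring
    set P1 := (z^2/4) ^ (2*(k:ℝ)+ν) with hP1
    set P2 := (1/c0) ^ (ν + μ/2 + 2*(k:ℝ)) with hP2
    set P3 := c0 ^ (-(μ/2)) with hP3
    set P4 := (2:ℝ) ^ (μ/2 - 1) with hP4
    set P5 := (2:ℝ) ^ (1 - (ν + μ/2 + 2*(k:ℝ))) with hP5
    set GA := Real.Gamma (ν + μ/2 + 2*(k:ℝ)) with hGA
    set DD := (k.factorial : ℝ) * Real.Gamma (ν + 1 + k) with hDD
    have hDD0 : DD ≠ 0 := by
      have := hΓk' k
      rw [hDD]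
      positivity
    calc P1 / DD * (2⁻¹ * (P2 * GA))
        = (P1 * P2) * GA * 2⁻¹ / DD := by ring
      _ = (P3 * P4 * P5) * GA * 2⁻¹ / DD := by rw [hpow]
      _ = 2⁻¹ * P3 * P4 / Real.sqrt π * (GA * P5 * Real.sqrt π / DD) := by
          field_simp
  have hMain : HasSum (fun k : ℕ => ∫ y in Ioi (0:ℝ), F k y) (C * T) := by
    rw [funext hkey]
    exact hGauss'.mul_left C
  have hSum : Summable (fun k : ℕ => ∫ y in Ioi (0:ℝ), F k y) := hMain.summable
  have hFnonneg : ∀ k : ℕ, ∀ y ∈ Ioi (0:ℝ), 0 ≤ F k y := by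
    intro k y hy
    have hy0 : (0:ℝ) < y := hy
    have h1 := Real.rpow_pos_of_pos hy0 (-(2*(ν + μ/2 + 2*(k:ℝ))+1))
    have h2 := hKpos k
    rw [hFdef]
    positivity
  have hnorm : ∀ k : ℕ, (∫ y, ‖F k y‖ ∂(volume.restrict (Ioi 0)))
      = ∫ y in Ioi (0:ℝ), F k y := fun k =>
    setIntegral_congr_fun measurableSet_Ioi
      (fun y hy => Real.norm_of_nonneg (hFnonneg k y hy))
  have hsumnorm : Summable (fun k : ℕ => ∫ y, ‖F k y‖ ∂(volume.restrict (Ioi 0))) := by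
    rw [funext hnorm]; exact hSum
  have hswap := MeasureTheory.integral_tsum_of_summable_integral_norm hInt hsumnorm
  -- pointwise identification with the Bessel integrand
  have hpt : ∀ y ∈ Ioi (0:ℝ), (∑' k : ℕ, F k y)
      = y ^ (-μ - 1) * Real.exp (-z^2 / (2 * y^2)) * besselI ν (z^2 / (2 * y^2)) := by
    intro y hy
    have hy0 : (0:ℝ) < y := hy
    have hy2 : (0:ℝ) < y^2 := by positivity
    rw [besselI, ← tsum_mul_left]
    refine tsum_congr (fun k => ?_)
    have hbase : z^2/(2*y^2)/2 = (z^2/4) * (y^2)⁻¹ := by ring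
    have hexp : -z^2/(2*y^2) = -(c0 / y^2) := by rw [hc0def]; ring
    have hinv : ((y^2)⁻¹ : ℝ) ^ (2*(k:ℝ)+ν) = y ^ (-(2*(2*(k:ℝ)+ν))) := by
      rw [← Real.rpow_natCast y 2]
      rw [show (((2:ℕ)):ℝ) = (2:ℝ) by norm_num]
      rw [← Real.rpow_neg hy0.le, ← Real.rpow_mul hy0.le]
      rw [show (-2:ℝ) * (2*(k:ℝ)+ν) = -(2*(2*(k:ℝ)+ν)) by ring]
    rw [hbase, hexp, Real.mul_rpow (by positivity) (by positivity), hinv]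
    rw [hFdef, hKdef]
    simp only
    have hyadd : y ^ (-μ-1) * y ^ (-(2*(2*(k:ℝ)+ν)))
        = y ^ (-(2*(ν + μ/2 + 2*(k:ℝ))+1)) := by
      rw [← Real.rpow_add hy0,
        show -μ-1 + -(2*(2*(k:ℝ)+ν)) = -(2*(ν + μ/2 + 2*(k:ℝ))+1) by ring]
    calc (z^2/4) ^ (2*(k:ℝ)+ν) / ((k.factorial : ℝ) * Real.Gamma ((k:ℝ) + ν + 1))
          * (y ^ (-(2*(ν + μ/2 + 2*(k:ℝ))+1)) * Real.exp (-(c0 / y^2)))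
        = (z^2/4) ^ (2*(k:ℝ)+ν) / ((k.factorial : ℝ) * Real.Gamma ((k:ℝ) + ν + 1))
          * (y ^ (-μ-1) * y ^ (-(2*(2*(k:ℝ)+ν))) * Real.exp (-(c0 / y^2))) := by
          rw [hyadd]
      _ = y ^ (-μ - 1) * Real.exp (-(c0/y^2)) * (1 / ((k.factorial : ℝ)
            * Real.Gamma ((k:ℝ) + ν + 1)) * ((z^2/4) ^ (2*(k:ℝ)+ν)
              * y ^ (-(2*(2*(k:ℝ)+ν))))) := by ring
  rw [setIntegral_congr_fun measurableSet_Ioi hpt] at hswap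
  rw [hMain.tsum_eq] at hswap
  rw [← hswap]
  -- final Gamma algebra
  have hdup1 := Real.Gamma_mul_Gamma_add_half ((ν + μ/2)/2)
  rw [show 2 * ((ν + μ/2)/2) = ν + μ/2 by ring] at hdup1
  have hdup2 := Real.Gamma_mul_Gamma_add_half ((ν + 1 - ((ν + μ/2)/2 + 1/2)))
  rw [show 2 * (ν + 1 - ((ν + μ/2)/2 + 1/2)) = ν - μ/2 + 1 by ring,
    show ν + 1 - ((ν + μ/2)/2 + 1/2) + 1/2 = ν + 1 - (ν + μ/2)/2 by ring] at hdup2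
  have hTv : T = Real.Gamma (ν + μ/2) * (2:ℝ) ^ (1 - (ν + μ/2)) * Real.sqrt π
      * Real.Gamma (1/2 - μ/2)
      / (Real.Gamma (ν - μ/2 + 1) * (2:ℝ) ^ (1 - (ν - μ/2 + 1)) * Real.sqrt π) := by
    rw [hTdef]
    rw [show ν + 1 - (ν + μ/2)/2 - ((ν + μ/2)/2 + 1/2) = 1/2 - μ/2 by ring]
    rw [mul_comm (Real.Gamma (ν + 1 - (ν + μ/2)/2)) _, hdup2, hdup1]
  have hcomb : c0 ^ (-(μ/2)) * (2:ℝ) ^ (μ/2 - 1) * (2:ℝ) ^ (1 - (ν + μ/2))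
      = (z ^ μ)⁻¹ * (2:ℝ) ^ (1 - (ν - μ/2 + 1)) := by
    have hc0z : c0 = z^2 * 2⁻¹ := by rw [hc0def]; ring
    have hz2 : (z^2 : ℝ) ^ (-(μ/2)) = (z ^ μ)⁻¹ := by
      rw [← Real.rpow_natCast z 2, show (((2:ℕ)):ℝ) = (2:ℝ) by norm_num,
        ← Real.rpow_mul hz.le, show (2:ℝ) * (-(μ/2)) = -μ by ring,
        Real.rpow_neg hz.le]
    have h2inv : ((2:ℝ)⁻¹) ^ (-(μ/2)) = (2:ℝ) ^ (μ/2) := by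
      rw [Real.inv_rpow (by norm_num : (0:ℝ) ≤ 2), ← Real.rpow_neg (by norm_num : (0:ℝ) ≤ 2),
        neg_neg]
    rw [hc0z, Real.mul_rpow (by positivity) (by norm_num), hz2, h2inv]
    have hpows : (2:ℝ) ^ (μ/2) * ((2:ℝ) ^ (μ/2 - 1) * (2:ℝ) ^ (1 - (ν + μ/2)))
        = (2:ℝ) ^ (1 - (ν - μ/2 + 1)) := by
      rw [← Real.rpow_add two_pos, ← Real.rpow_add two_pos]
      congr 1
      ring
    rw [mul_assoc, mul_assoc, hpows]
  have hG3 : (0:ℝ) < Real.Gamma (ν - μ/2 + 1) := Real.Gamma_pos_of_pos (by linarith)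
  have hE2 : (0:ℝ) < (2:ℝ) ^ (1 - (ν - μ/2 + 1)) := Real.rpow_pos_of_pos two_pos _
  have hzμ : (0:ℝ) < z ^ μ := Real.rpow_pos_of_pos hz _
  rw [hCdef, hTv]
  set G1 := Real.Gamma (ν + μ/2) with hG1d
  set G2 := Real.Gamma (1/2 - μ/2) with hG2d
  set G3 := Real.Gamma (ν - μ/2 + 1) with hG3d
  set S := Real.sqrt π with hSd
  set E1 := (2:ℝ) ^ (1 - (ν + μ/2)) with hE1d
  set E2 := (2:ℝ) ^ (1 - (ν - μ/2 + 1)) with hE2d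
  set P3 := c0 ^ (-(μ/2)) with hP3d
  set P4 := (2:ℝ) ^ (μ/2 - 1) with hP4d
  have hfin : P3 * P4 * E1 = (z ^ μ)⁻¹ * E2 := hcomb
  have hP3pos : (0:ℝ) < P3 := Real.rpow_pos_of_pos hc0 _
  have hP4pos : (0:ℝ) < P4 := Real.rpow_pos_of_pos two_pos _
  have hE1pos : (0:ℝ) < E1 := Real.rpow_pos_of_pos two_pos _
  calc 2⁻¹ * P3 * P4 / S * (G1 * E1 * S * G2 / (G3 * E2 * S))
      = (P3 * P4 * E1) * (2⁻¹ * G1 * G2 / (S * G3 * E2)) := by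
        field_simp
    _ = ((z ^ μ)⁻¹ * E2) * (2⁻¹ * G1 * G2 / (S * G3 * E2)) := by rw [hfin]
    _ = G2 * G1 / (2 * S * z ^ μ * G3) := by
        field_simp
end
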